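/- For a prime p and nonnegative integer n, the quantity C(p^{n+1}, p^n) · c_{p^n - 1} / c_{p^{n+1} - 1} equals p, where c_m denotes the base-p multinomial coefficient. Equivalently, C(p^{n+1}, p^n) · c_{p^n - 1} = p · c_{p^{n+1} - 1}. -/

import Mathlib

/-- `multinomC p n` is the multinomial coefficient
`c_n = n! / ∏_i (n_i p^i)!`, where the `n_i` are the base-`p` digits of `n`. -/
def multinomC (p n : ℕ) : ℕ :=
  n.factorial / ((Nat.digits p n).zipIdx.map fun x => (x.1 * p ^ x.2).factorial).prod

namespace Stmt6Aux

def D (p n : ℕ) : ℕ := ∏ i ∈ Finset.range n, ((p - 1) * p ^ i).factorial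

lemma digits_pow_sub_one {p : ℕ} (hp : 2 ≤ p) : ∀ n : ℕ,
    Nat.digits p (p ^ n - 1) = List.replicate n (p - 1) := by
  intro n
  induction n with
  | zero => simp
  | succ n ih =>
    have hA : 1 ≤ p ^ n := Nat.one_le_pow _ _ (by omega)
    have key : p ^ (n + 1) - 1 = (p - 1) + p * (p ^ n - 1) := by
      have h1 : p ^ (n + 1) = p * p ^ n := pow_succ' p n
      have h2 : p * (p ^ n - 1) = p * p ^ n - p := by
        rw [Nat.mul_sub, mul_one]
      have h3 : p ≤ p * p ^ n := Nat.le_mul_of_pos_right _ (by omega)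
      omega
    have hpos : 0 < p ^ (n + 1) - 1 := by
      have : p ≤ p ^ (n + 1) := Nat.le_self_pow (by omega) p
      omega
    rw [Nat.digits_def' (by omega : 1 < p) hpos, key]
    have hm : ((p - 1) + p * (p ^ n - 1)) % p = p - 1 := by
      rw [Nat.add_mul_mod_self_left, Nat.mod_eq_of_lt (by omega)]
    have hd : ((p - 1) + p * (p ^ n - 1)) / p = p ^ n - 1 := by
      rw [Nat.add_mul_div_left _ _ (by omega : 0 < p), Nat.div_eq_of_lt (by omega)]
      omega
    rw [hm, hd, ih, List.replicate_succ]

lemma enumFrom_prod (p a : ℕ) : ∀ n k : ℕ,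
    ((List.zipIdx (List.replicate n a) k).map fun x => (x.1 * p ^ x.2).factorial).prod
      = ∏ i ∈ Finset.range n, (a * p ^ (i + k)).factorial := by
  intro n
  induction n with
  | zero => simp
  | succ n ih =>
    intro k
    rw [List.replicate_succ, List.zipIdx_cons, List.map_cons, List.prod_cons,
      ih (k + 1), Finset.prod_range_succ', mul_comm]
    congr 1
    · apply Finset.prod_congr rfl; intro i _; ring_nf
    · ring_nf

lemma multinom_eq {p : ℕ} (hp : 2 ≤ p) (n : ℕ) :
    multinomC p (p ^ n - 1) = (p ^ n - 1).factorial / D p n := by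
  unfold multinomC D
  rw [digits_pow_sub_one hp n]
  congr 1
  have := enumFrom_prod p (p - 1) n 0
  rw [this]
  apply Finset.prod_congr rfl; intro i _; ring_nf

lemma D_dvd {p : ℕ} (hp : 2 ≤ p) : ∀ n : ℕ, D p n ∣ (p ^ n - 1).factorial := by
  intro n
  induction n with
  | zero => simp [D]
  | succ n ih =>
    rw [D, Finset.prod_range_succ, ← D]
    have key : (p ^ n - 1) + (p - 1) * p ^ n = p ^ (n + 1) - 1 := by
      have hA : 1 ≤ p ^ n := Nat.one_le_pow _ _ (by omega)
      have h1 : p ^ (n + 1) = p * p ^ n := pow_succ' p n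
      have h2 : (p - 1) * p ^ n = p * p ^ n - p ^ n := by
        rw [Nat.sub_mul, one_mul]
      have h3 : p ^ n ≤ p * p ^ n := Nat.le_mul_of_pos_left _ (by omega)
      omega
    calc D p n * ((p - 1) * p ^ n).factorial
        ∣ (p ^ n - 1).factorial * ((p - 1) * p ^ n).factorial :=
          mul_dvd_mul_right ih _
      _ ∣ ((p ^ n - 1) + (p - 1) * p ^ n).factorial :=
          Nat.factorial_mul_factorial_dvd_factorial_add _ _
      _ = (p ^ (n + 1) - 1).factorial := by rw [key]

end Stmt6Aux

open Stmt6Aux in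
/-- For a prime `p` and `n ≥ 0`, one has
`C(p^(n+1), p^n) · c_{p^n - 1} = p · c_{p^(n+1) - 1}`. -/
theorem stmt_6 (p : ℕ) (hp : p.Prime) (n : ℕ) :
    (p ^ (n + 1)).choose (p ^ n) * multinomC p (p ^ n - 1)
      = p * multinomC p (p ^ (n + 1) - 1) := by
  have hp2 : 2 ≤ p := hp.two_le
  obtain ⟨a, ha⟩ := D_dvd hp2 n
  obtain ⟨b, hb⟩ := D_dvd hp2 (n + 1)
  have hDpos : ∀ m, 0 < D p m := fun m =>
    Finset.prod_pos fun i _ => Nat.factorial_pos _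
  rw [multinom_eq hp2, multinom_eq hp2, ha, hb,
    Nat.mul_div_cancel_left _ (hDpos n), Nat.mul_div_cancel_left _ (hDpos (n + 1))]
  -- goal : choose * a = p * b
  have hA : 1 ≤ p ^ n := Nat.one_le_pow _ _ (by omega)
  have hB : 1 ≤ p ^ (n + 1) := Nat.one_le_pow _ _ (by omega)
  have hle : p ^ n ≤ p ^ (n + 1) := Nat.pow_le_pow_right (by omega) (by omega)
  have hsub : p ^ (n + 1) - p ^ n = (p - 1) * p ^ n := by
    rw [Nat.sub_mul, one_mul, ← pow_succ']
  have hchoose := Nat.choose_mul_factorial_mul_factorial hle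
  rw [hsub] at hchoose
  -- expand factorials
  have hf1 : (p ^ n).factorial = p ^ n * (p ^ n - 1).factorial := by
    conv_lhs => rw [show p ^ n = (p ^ n - 1) + 1 by omega]
    rw [Nat.factorial_succ]
    congr 1
    omega
  have hf2 : (p ^ (n + 1)).factorial = p ^ (n + 1) * (p ^ (n + 1) - 1).factorial := by
    conv_lhs => rw [show p ^ (n + 1) = (p ^ (n + 1) - 1) + 1 by omega]
    rw [Nat.factorial_succ]
    congr 1
    omega
  rw [hf1, hf2, ha, hb] at hchoose
  have hDsucc : D p (n + 1) = D p n * ((p - 1) * p ^ n).factorial := by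
    rw [D, Finset.prod_range_succ]; rfl
  rw [hDsucc, pow_succ'] at hchoose
  have hcancel : p ^ n * (D p n * ((p - 1) * p ^ n).factorial)
      * ((p ^ (n + 1)).choose (p ^ n) * a)
      = p ^ n * (D p n * ((p - 1) * p ^ n).factorial) * (p * b) := by
    ring_nf
    ring_nf at hchoose
    linarith [hchoose]
  exact Nat.eq_of_mul_eq_mul_left (by have := hDpos n; positivity) hcancel
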